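/- Let Ω ⊂ ℝ^N be a bounded open set and let W : Ω × Ω × ℝ^d × ℝ^d → ℝ be a normal integrand, bounded from below, such that W(x,y,·,·) is separately level convex for L^N⊗L^N-a.e. (x,y) ∈ Ω × Ω, i.e., for a.e. (x,y), every c ∈ ℝ and every fixed second (resp. first) matrix argument, the sublevel sets are convex. Then the functional G(u) = esssup_{(x,y)∈Ω×Ω} W(x,y,u(x),u(y)) is sequentially weakly* lower semicontinuous on L^∞(Ω;ℝ^d): whenever u_j ⇀* u weakly* in L^∞(Ω;ℝ^d), one has G(u) ≤ liminf_{j→∞} G(u_j). -/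

import Mathlib

open MeasureTheory Filter Topology Bornology NNReal ENNReal

noncomputable section

section NLSAuxSection
open Metric Set

namespace NLSAux

variable {d : ℕ}

/-- A linear functional on `Fin d → ℝ` given by coefficients. -/
def lin (a : Fin d → ℝ) (ξ : Fin d → ℝ) : ℝ := ∑ i, a i * ξ i

lemma lin_continuous (a : Fin d → ℝ) : Continuous (lin a) :=
  continuous_finset_sum _ fun i _ => continuous_const.mul (continuous_apply i)

lemma measurable_lin (a : Fin d → ℝ) : Measurable (lin a) :=
  (lin_continuous a).measurable

lemma abs_lin_sub_lin (a b ξ : Fin d → ℝ) :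
    |lin a ξ - lin b ξ| ≤ (∑ i, |a i - b i|) * ‖ξ‖ := by
  rw [lin, lin, ← Finset.sum_sub_distrib, Finset.sum_mul]
  refine (Finset.abs_sum_le_sum_abs _ _).trans (Finset.sum_le_sum fun i _ => ?_)
  rw [← sub_mul, abs_mul]
  refine mul_le_mul_of_nonneg_left ?_ (abs_nonneg _)
  simpa using norm_le_pi_norm ξ i

lemma abs_lin_le (a ξ : Fin d → ℝ) : |lin a ξ| ≤ (∑ i, |a i|) * ‖ξ‖ := by
  have := abs_lin_sub_lin a 0 ξ
  simpa [lin] using this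

lemma rat_approx (a : Fin d → ℝ) {θ : ℝ} (hθ : 0 < θ) :
    ∃ q : Fin d → ℚ, ∑ i, |a i - (q i : ℝ)| < θ := by
  have hd : (0:ℝ) < θ / (2 * (d + 1)) := by positivity
  have h : ∀ i : Fin d, ∃ q : ℚ, |a i - (q : ℝ)| < θ / (2 * (d + 1)) := by
    intro i
    obtain ⟨q, h1, h2⟩ := exists_rat_btwn (show a i < a i + θ / (2 * (d + 1)) by linarith)
    exact ⟨q, by rw [abs_sub_lt_iff]; constructor <;> linarith⟩
  choose q hq using h
  refine ⟨q, ?_⟩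
  calc ∑ i, |a i - (q i : ℝ)| ≤ ∑ _i : Fin d, θ / (2 * (d + 1)) :=
        Finset.sum_le_sum fun i _ => (hq i).le
    _ = d * (θ / (2 * (d + 1))) := by simp [Finset.sum_const, mul_comm]
    _ = ((d:ℝ) / (2 * (d + 1))) * θ := by ring
    _ < 1 * θ := by
        refine mul_lt_mul_of_pos_right ?_ hθ
        rw [div_lt_one (by positivity)]
        have : (0:ℝ) ≤ (d:ℕ) := by positivity
        linarith
    _ = θ := one_mul θ

lemma clm_eq_lin (f : (Fin d → ℝ) →L[ℝ] ℝ) (ξ : Fin d → ℝ) :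
    f ξ = lin (fun i => f (Pi.single i 1)) ξ := by
  have hξ : ξ = ∑ i, ξ i • (Pi.single i (1:ℝ) : Fin d → ℝ) := by
    conv_lhs => rw [pi_eq_sum_univ ξ]
    refine Finset.sum_congr rfl fun i _ => ?_
    ext j
    by_cases h : i = j <;> simp [Pi.single_apply, h, eq_comm]
  conv_lhs => rw [hξ]
  rw [map_sum, lin]
  refine Finset.sum_congr rfl fun i _ => ?_
  rw [f.map_smul]
  simp [mul_comm]

/-- Separation of a point from a bounded closed convex set by a rational linear functional. -/
lemma sep_rat {K : Set (Fin d → ℝ)} (hKc : Convex ℝ K) (hKcl : IsClosed K)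
    {C : ℝ} (hKb : ∀ ξ ∈ K, ‖ξ‖ ≤ C) {x : Fin d → ℝ} (hx : x ∉ K) :
    ∃ (q : Fin d → ℚ) (r : ℚ), (∀ ξ ∈ K, lin (fun i => (q i : ℝ)) ξ < r) ∧
      (r : ℝ) < lin (fun i => (q i : ℝ)) x := by
  rcases K.eq_empty_or_nonempty with hK | hK
  · subst hK
    exact ⟨0, -1, by simp, by simp [lin]⟩
  · obtain ⟨f, u, hfx, hfK⟩ := geometric_hahn_banach_point_closed hKc hKcl hx
    set a : Fin d → ℝ := fun i => -f (Pi.single i 1) with ha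
    have hfa : ∀ ξ, lin a ξ = -f ξ := by
      intro ξ
      rw [clm_eq_lin f ξ, lin, lin, ← Finset.sum_neg_distrib]
      exact Finset.sum_congr rfl fun i _ => by rw [ha]; ring
    have hKcomp : IsCompact K := by
      refine (isCompact_closedBall (0 : Fin d → ℝ) C).of_isClosed_subset hKcl ?_
      intro ξ hξ; exact mem_closedBall_zero_iff.2 (hKb ξ hξ)
    obtain ⟨ξ₀, hξ₀K, hξ₀max⟩ := hKcomp.exists_isMaxOn hK (lin_continuous a).continuousOn
    set M := lin a ξ₀ with hM
    have hMlt : M < lin a x := by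
      rw [hM, hfa, hfa]
      have h1 := hfK ξ₀ hξ₀K
      linarith
    have hMub : ∀ ξ ∈ K, lin a ξ ≤ M := hξ₀max
    -- rational approximation
    have hC0 : 0 ≤ C := le_trans (norm_nonneg _) (hKb ξ₀ hξ₀K)
    set D := C + ‖x‖ + 1 with hD
    have hD0 : 0 < D := by positivity
    have hgap : 0 < lin a x - M := by linarith
    obtain ⟨q, hq⟩ := rat_approx a (show 0 < (lin a x - M) / (4 * D) by positivity)
    set θ := (lin a x - M) / (4 * D) with hθ
    have key : ∀ ξ : Fin d → ℝ, ‖ξ‖ ≤ C + ‖x‖ → |lin (fun i => (q i : ℝ)) ξ - lin a ξ| ≤ θ * D := by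
      intro ξ hξ
      have h1 := abs_lin_sub_lin (fun i => (q i : ℝ)) a ξ
      have h2 : ∑ i, |(q i : ℝ) - a i| < θ := by
        refine lt_of_le_of_lt (le_of_eq ?_) hq
        refine Finset.sum_congr rfl fun i _ => (abs_sub_comm _ _)
      have h3 : (∑ i, |(q i : ℝ) - a i|) * ‖ξ‖ ≤ θ * D := by
        refine mul_le_mul h2.le (by linarith) (norm_nonneg _) (by positivity)
      exact h1.trans h3
    have hKq : ∀ ξ ∈ K, lin (fun i => (q i : ℝ)) ξ ≤ M + θ * D := by
      intro ξ hξ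
      have h1 := key ξ ((hKb ξ hξ).trans (by linarith [norm_nonneg x]))
      have h2 := hMub ξ hξ
      have := abs_le.1 h1
      linarith [this.2]
    have hxq : lin a x - θ * D ≤ lin (fun i => (q i : ℝ)) x := by
      have h1 := key x (by linarith [hC0])
      have := abs_le.1 h1
      linarith [this.1]
    have hθD : θ * D = (lin a x - M) / 4 := by
      rw [hθ]; field_simp
    have hlt : M + θ * D < lin a x - θ * D := by rw [hθD]; linarith
    obtain ⟨r, hr1, hr2⟩ := exists_rat_btwn hlt
    refine ⟨q, r, fun ξ hξ => lt_of_le_of_lt (hKq ξ hξ) hr1, lt_of_lt_of_le hr2 hxq⟩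

lemma nat_extraction {P : ℕ → ℕ → Prop} (h : ∀ n m, ∃ k, m ≤ k ∧ P n k) :
    ∃ φ : ℕ → ℕ, StrictMono φ ∧ ∀ n, P n (φ n) := by
  choose g hg1 hg2 using h
  let φ : ℕ → ℕ := fun n => Nat.rec (g 0 0) (fun n ih => g (n + 1) (ih + 1)) n
  have hφs : ∀ n, φ (n + 1) = g (n + 1) (φ n + 1) := fun n => rfl
  refine ⟨φ, strictMono_nat_of_lt_succ fun n => ?_, fun n => ?_⟩
  · have := hg1 (n + 1) (φ n + 1); rw [hφs]; omega
  · cases n with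
    | zero => exact hg2 0 0
    | succ m => rw [hφs]; exact hg2 (m + 1) (φ m + 1)

/-- The set of cluster points of a sequence. -/
def Cl (w : ℕ → Fin d → ℝ) : Set (Fin d → ℝ) :=
  {η | ∀ ε > (0:ℝ), ∀ m : ℕ, ∃ k, m ≤ k ∧ ‖w k - η‖ < ε}

lemma mem_Cl_of_tendsto {w : ℕ → Fin d → ℝ} {φ : ℕ → ℕ} (hφ : StrictMono φ)
    {η : Fin d → ℝ} (h : Tendsto (w ∘ φ) atTop (𝓝 η)) : η ∈ Cl w := by
  intro ε hε m
  obtain ⟨n₀, hn₀⟩ := (Metric.tendsto_atTop.1 h) ε hε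
  refine ⟨φ (max m n₀), le_trans (le_max_left m n₀) (hφ.id_le _), ?_⟩
  have := hn₀ (max m n₀) (le_max_right m n₀)
  rwa [Function.comp_apply, dist_eq_norm] at this

lemma Cl_subset_ball {w : ℕ → Fin d → ℝ} {C : ℝ} (hw : ∀ k, ‖w k‖ ≤ C) :
    ∀ η ∈ Cl w, ‖η‖ ≤ C := by
  intro η hη
  refine le_of_forall_pos_le_add fun ε hε => ?_
  obtain ⟨k, -, hk⟩ := hη ε hε 0
  calc ‖η‖ = ‖w k - (w k - η)‖ := by ring_nf
    _ ≤ ‖w k‖ + ‖w k - η‖ := norm_sub_le _ _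
    _ ≤ C + ε := add_le_add (hw k) hk.le

lemma Cl_nonempty {w : ℕ → Fin d → ℝ} {C : ℝ} (hw : ∀ k, ‖w k‖ ≤ C) :
    ∃ η, η ∈ Cl w := by
  obtain ⟨η, -, φ, hφ, hlim⟩ := tendsto_subseq_of_bounded (isBounded_closedBall (x := (0 : Fin d → ℝ)) (r := C))
    (fun k => mem_closedBall_zero_iff.2 (hw k))
  exact ⟨η, mem_Cl_of_tendsto hφ hlim⟩

/-- Bolzano–Weierstrass with a frequently-satisfied predicate: from a bounded sequence and a
predicate holding along a subsequence with prescribed radii, extract a cluster point. -/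
lemma subseq_cluster {w : ℕ → Fin d → ℝ} {C : ℝ} (hw : ∀ k, ‖w k‖ ≤ C)
    {Q : ℕ → Prop} (h : ∀ m, ∃ k, m ≤ k ∧ Q k) :
    ∃ (ξ : Fin d → ℝ) (ψ : ℕ → ℕ), StrictMono ψ ∧ (∀ j, Q (ψ j)) ∧ ‖ξ‖ ≤ C ∧
      Tendsto (w ∘ ψ) atTop (𝓝 ξ) := by
  obtain ⟨φ, hφ, hφQ⟩ := nat_extraction (P := fun _ k => Q k) (fun _ m => h m)
  obtain ⟨ξ, hξmem, ρ, hρ, hlim⟩ := tendsto_subseq_of_bounded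
    (isBounded_closedBall (x := (0 : Fin d → ℝ)) (r := C))
    (fun k => mem_closedBall_zero_iff.2 (hw (φ k)))
  refine ⟨ξ, φ ∘ ρ, hφ.comp hρ, fun j => hφQ (ρ j), ?_, hlim⟩
  have : ξ ∈ closedBall (0 : Fin d → ℝ) C := by
    rwa [closure_closedBall] at hξmem
  exact mem_closedBall_zero_iff.1 this

lemma tendsto_of_norm_sub_lt {w : ℕ → Fin d → ℝ} {η : Fin d → ℝ}
    (h : ∀ n, ‖w n - η‖ < 1 / (n + 1)) : Tendsto w atTop (𝓝 η) := by
  rw [Metric.tendsto_atTop]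
  intro ε hε
  obtain ⟨n₀, hn₀⟩ := exists_nat_one_div_lt hε
  refine ⟨n₀, fun n hn => ?_⟩
  rw [dist_eq_norm]
  refine lt_of_lt_of_le (h n) (le_trans ?_ hn₀.le)
  refine one_div_le_one_div_of_le (by positivity) ?_
  have : (n₀:ℝ) ≤ (n:ℝ) := Nat.cast_le.2 hn
  linarith

section Integral

variable {α : Type*} [MeasurableSpace α] {μ : Measure α} [IsFiniteMeasure μ]

lemma integrable_of_ae_bound {f : α → ℝ} (hf : AEStronglyMeasurable f μ) {M : ℝ}
    (hb : ∀ᵐ x ∂μ, |f x| ≤ M) : Integrable f μ :=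
  Integrable.mono' (integrable_const M) hf (by simpa [Real.norm_eq_abs] using hb)

/-- Strict lower bound for the integral of a function strictly above `r` on a set of
positive measure. -/
lemma integral_gt_of_lt_on {B : Set α} (hB : MeasurableSet B) (hB0 : μ B ≠ 0)
    {f : α → ℝ} (hfm : Measurable f) (hfi : IntegrableOn f B μ) {r : ℝ}
    (hr : ∀ x ∈ B, r < f x) : r * (μ B).toReal < ∫ x in B, f x ∂μ := by
  have hcov : B ⊆ ⋃ m : ℕ, B ∩ {x | r + 1 / (m + 1) ≤ f x} := by
    intro x hx
    obtain ⟨m, hm⟩ := exists_nat_one_div_lt (sub_pos.2 (hr x hx))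
    exact mem_iUnion.2 ⟨m, hx, by simp only [mem_setOf_eq]; linarith⟩
  have hex : ∃ m : ℕ, μ (B ∩ {x | r + 1 / (m + 1) ≤ f x}) ≠ 0 := by
    by_contra hcon
    push_neg at hcon
    exact hB0 (measure_mono_null hcov (measure_iUnion_null fun m => hcon m))
  obtain ⟨m, hm⟩ := hex
  set t : Set α := {x | r + 1 / (m + 1) ≤ f x} with ht
  have htm : MeasurableSet t := measurableSet_le measurable_const hfm
  have hsplit : ∫ x in B, f x ∂μ = ∫ x in B ∩ t, f x ∂μ + ∫ x in B \ t, f x ∂μ := by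
    have hdisj : Disjoint (B ∩ t) (B \ t) := by
      refine Set.disjoint_left.2 fun x hx1 hx2 => hx2.2 hx1.2
    rw [← setIntegral_union hdisj (hB.diff htm) (hfi.mono_set inter_subset_left)
      (hfi.mono_set diff_subset), Set.inter_union_diff]
  have hI1 : (r + 1 / (m + 1)) * (μ (B ∩ t)).toReal ≤ ∫ x in B ∩ t, f x ∂μ :=
    setIntegral_ge_of_const_le_real (hB.inter htm) (measure_ne_top μ _)
      (fun x hx => hx.2) (hfi.mono_set inter_subset_left)
  have hI2 : r * (μ (B \ t)).toReal ≤ ∫ x in B \ t, f x ∂μ :=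
    setIntegral_ge_of_const_le_real (hB.diff htm) (measure_ne_top μ _)
      (fun x hx => (hr x hx.1).le) (hfi.mono_set diff_subset)
  have hadd : μ (B ∩ t) + μ (B \ t) = μ B := measure_inter_add_diff B htm
  have htr : (μ B).toReal = (μ (B ∩ t)).toReal + (μ (B \ t)).toReal := by
    rw [← ENNReal.toReal_add (measure_ne_top μ _) (measure_ne_top μ _), hadd]
  have hpos : 0 < (μ (B ∩ t)).toReal := ENNReal.toReal_pos hm (measure_ne_top μ _)
  have h1m : (0:ℝ) < 1 / (m + 1) := by positivity
  calc r * (μ B).toReal = r * (μ (B ∩ t)).toReal + r * (μ (B \ t)).toReal := by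
        rw [htr]; ring
    _ < (r + 1 / (m + 1)) * (μ (B ∩ t)).toReal + r * (μ (B \ t)).toReal := by
        have : r * (μ (B ∩ t)).toReal < (r + 1 / (m + 1)) * (μ (B ∩ t)).toReal := by
          refine mul_lt_mul_of_pos_right ?_ hpos; linarith
        linarith
    _ ≤ ∫ x in B ∩ t, f x ∂μ + ∫ x in B \ t, f x ∂μ := add_le_add hI1 hI2
    _ = ∫ x in B, f x ∂μ := hsplit.symm

omit [IsFiniteMeasure μ] in
lemma integral_lin_comm (h : α → ℝ) (w : α → Fin d → ℝ) (q : Fin d → ℝ)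
    (hint : ∀ i, Integrable (fun x => h x * w x i) μ) :
    ∫ x, h x * lin q (w x) ∂μ = ∑ i, q i * ∫ x, h x * w x i ∂μ := by
  have hpt : ∀ x, h x * lin q (w x) = ∑ i, q i * (h x * w x i) := by
    intro x
    rw [lin, Finset.mul_sum]
    exact Finset.sum_congr rfl fun i _ => by ring
  simp_rw [hpt]
  rw [integral_finset_sum _ fun i _ => (hint i).const_mul (q i)]
  exact Finset.sum_congr rfl fun i _ => MeasureTheory.integral_const_mul _ _

/-- The core testing argument: no rational functional can separate `u₀` from infinitely many
of the `v k` uniformly on a set of positive measure, by weak* convergence. -/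
lemma no_sep_test {v : ℕ → α → Fin d → ℝ} {u₀ : α → Fin d → ℝ} {C : ℝ}
    (hvm : ∀ k, Measurable (v k)) (hu₀ : Measurable u₀)
    (hvb : ∀ k, ∀ᵐ x ∂μ, ‖v k x‖ ≤ C) (hu₀b : ∀ᵐ x ∂μ, ‖u₀ x‖ ≤ C)
    (htest : ∀ h : α → ℝ, Integrable h μ → ∀ i : Fin d,
      Tendsto (fun k => ∫ x, h x * v k x i ∂μ) atTop (𝓝 (∫ x, h x * u₀ x i ∂μ)))
    {B : Set α} (hBm : MeasurableSet B) (hB0 : μ B ≠ 0)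
    {q : Fin d → ℝ} {r : ℝ} {K : ℕ → Prop} (hKinf : ∀ m : ℕ, ∃ k, m ≤ k ∧ K k)
    (hlt : ∀ x ∈ B, ∀ k, K k → lin q (v k x) < r)
    (hgt : ∀ x ∈ B, r < lin q (u₀ x)) : False := by
  classical
  set h : α → ℝ := B.indicator fun _ => (1:ℝ) with hh
  have hhm : Measurable h := measurable_const.indicator hBm
  have hhi : Integrable h μ := (integrable_const (1:ℝ)).indicator hBm
  have habs : ∀ x, |h x| ≤ 1 := by
    intro x; by_cases hx : x ∈ B <;> simp [hh, Set.indicator_apply, hx]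
  have hint : ∀ (w : α → Fin d → ℝ), Measurable w → (∀ᵐ x ∂μ, ‖w x‖ ≤ C) →
      ∀ i, Integrable (fun x => h x * w x i) μ := by
    intro w hw hwb i
    refine integrable_of_ae_bound
      ((hhm.mul ((measurable_pi_apply i).comp hw)).aestronglyMeasurable) (M := C) ?_
    filter_upwards [hwb] with x hx
    calc |h x * w x i| = |h x| * |w x i| := abs_mul _ _
      _ ≤ 1 * C := by
          refine mul_le_mul (habs x) ?_ (abs_nonneg _) zero_le_one
          exact le_trans (by simpa using norm_le_pi_norm (w x) i) hx
      _ = C := one_mul C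
  have hintlin : ∀ (w : α → Fin d → ℝ), Measurable w → (∀ᵐ x ∂μ, ‖w x‖ ≤ C) →
      Integrable (fun x => h x * lin q (w x)) μ := by
    intro w hw hwb
    refine integrable_of_ae_bound
      ((hhm.mul ((measurable_lin q).comp hw)).aestronglyMeasurable)
      (M := (∑ i, |q i|) * C) ?_
    filter_upwards [hwb] with x hx
    have hq0 : (0:ℝ) ≤ ∑ i, |q i| := Finset.sum_nonneg fun i _ => abs_nonneg _
    calc |h x * lin q (w x)| = |h x| * |lin q (w x)| := abs_mul _ _
      _ ≤ 1 * ((∑ i, |q i|) * ‖w x‖) :=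
          mul_le_mul (habs x) (abs_lin_le q (w x)) (abs_nonneg _) zero_le_one
      _ = (∑ i, |q i|) * ‖w x‖ := one_mul _
      _ ≤ (∑ i, |q i|) * C := mul_le_mul_of_nonneg_left hx hq0
  have hJv : ∀ k, ∫ x, h x * lin q (v k x) ∂μ = ∑ i, q i * ∫ x, h x * v k x i ∂μ :=
    fun k => integral_lin_comm h (v k) q (hint _ (hvm k) (hvb k))
  have hJu : ∫ x, h x * lin q (u₀ x) ∂μ = ∑ i, q i * ∫ x, h x * u₀ x i ∂μ :=
    integral_lin_comm h u₀ q (hint _ hu₀ hu₀b)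
  have htend : Tendsto (fun k => ∫ x, h x * lin q (v k x) ∂μ) atTop
      (𝓝 (∫ x, h x * lin q (u₀ x) ∂μ)) := by
    simp_rw [hJv, hJu]
    exact tendsto_finset_sum _ fun i _ => ((htest h hhi i).const_mul (q i))
  have hub : ∀ k, K k → ∫ x, h x * lin q (v k x) ∂μ ≤ r * (μ B).toReal := by
    intro k hk
    have hple : ∀ x, h x * lin q (v k x) ≤ B.indicator (fun _ => r) x := by
      intro x
      by_cases hx : x ∈ B
      · simp only [hh, Set.indicator_of_mem hx, one_mul]
        exact (hlt x hx k hk).le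
      · simp [hh, Set.indicator_of_notMem hx]
    calc ∫ x, h x * lin q (v k x) ∂μ ≤ ∫ x, B.indicator (fun _ => r) x ∂μ :=
          integral_mono (hintlin _ (hvm k) (hvb k)) ((integrable_const r).indicator hBm) hple
      _ = (μ B).toReal • r := integral_indicator_const r hBm
      _ = r * (μ B).toReal := by rw [smul_eq_mul]; ring
  have hlb : r * (μ B).toReal < ∫ x, h x * lin q (u₀ x) ∂μ := by
    have heq : ∫ x, h x * lin q (u₀ x) ∂μ = ∫ x in B, lin q (u₀ x) ∂μ := by
      rw [← integral_indicator hBm]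
      congr 1; funext x
      by_cases hx : x ∈ B <;> simp [hh, Set.indicator_apply, hx]
    rw [heq]
    have hIO : IntegrableOn (fun x => lin q (u₀ x)) B μ := by
      refine integrable_of_ae_bound (μ := μ.restrict B)
        (((measurable_lin q).comp hu₀).aestronglyMeasurable) (M := (∑ i, |q i|) * C) ?_
      filter_upwards [ae_restrict_of_ae hu₀b] with x hx
      have hq0 : (0:ℝ) ≤ ∑ i, |q i| := Finset.sum_nonneg fun i _ => abs_nonneg _
      exact (abs_lin_le q (u₀ x)).trans (mul_le_mul_of_nonneg_left hx hq0)
    exact integral_gt_of_lt_on hBm hB0 ((measurable_lin q).comp hu₀) hIO hgt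
  obtain ⟨ψ, hψ, hψK⟩ := extraction_of_frequently_atTop (frequently_atTop.2 hKinf)
  have hlim2 : Tendsto (fun j => ∫ x, h x * lin q (v (ψ j) x) ∂μ) atTop
      (𝓝 (∫ x, h x * lin q (u₀ x) ∂μ)) := htend.comp hψ.tendsto_atTop
  have hfin : ∫ x, h x * lin q (u₀ x) ∂μ ≤ r * (μ B).toReal :=
    le_of_tendsto hlim2 (Eventually.of_forall fun j => hub _ (hψK j))
  linarith

lemma measurable_imp {β} [MeasurableSpace β] {s t : Set β} (hs : MeasurableSet s)
    (ht : MeasurableSet t) : MeasurableSet {p | p ∈ s → p ∈ t} := by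
  rw [show {p | p ∈ s → p ∈ t} = sᶜ ∪ t from by ext p; simp [imp_iff_not_or]]
  exact hs.compl.union ht

lemma Q_null {v : ℕ → α → Fin d → ℝ} {u₀ : α → Fin d → ℝ} {C : ℝ}
    (hvm : ∀ k, Measurable (v k)) (hu₀ : Measurable u₀)
    (hvb : ∀ k, ∀ᵐ x ∂μ, ‖v k x‖ ≤ C) (hu₀b : ∀ᵐ x ∂μ, ‖u₀ x‖ ≤ C)
    (htest : ∀ h : α → ℝ, Integrable h μ → ∀ i : Fin d,
      Tendsto (fun k => ∫ x, h x * v k x i ∂μ) atTop (𝓝 (∫ x, h x * u₀ x i ∂μ)))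
    (q : Fin d → ℝ) (r : ℝ) (n : ℕ) :
    μ {x | r < lin q (u₀ x) ∧ ∀ k, n ≤ k → lin q (v k x) < r} = 0 := by
  by_contra hB0
  have hBm : MeasurableSet {x | r < lin q (u₀ x) ∧ ∀ k, n ≤ k → lin q (v k x) < r} := by
    refine MeasurableSet.inter ?_ ?_
    · exact measurableSet_lt measurable_const ((measurable_lin q).comp hu₀)
    · show MeasurableSet {x | ∀ k : ℕ, n ≤ k → lin q (v k x) < r}
      rw [Set.setOf_forall]
      refine MeasurableSet.iInter fun k => ?_
      by_cases hk : n ≤ k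
      · simp only [hk, true_implies]
        exact measurableSet_lt ((measurable_lin q).comp (hvm k)) measurable_const
      · simp only [hk, false_implies, Set.setOf_true]
        exact MeasurableSet.univ
  exact no_sep_test hvm hu₀ hvb hu₀b htest hBm hB0 (K := fun k => n ≤ k)
    (fun m => ⟨max n m, le_max_right _ _, le_max_left _ _⟩)
    (fun x hx k hk => hx.2 k hk) (fun x hx => hx.1)

lemma P_null [SFinite μ] {v : ℕ → α → Fin d → ℝ} {u₀ : α → Fin d → ℝ} {C : ℝ}
    (hvm : ∀ k, Measurable (v k)) (hu₀ : Measurable u₀)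
    (hvb : ∀ k, ∀ᵐ x ∂μ, ‖v k x‖ ≤ C) (hu₀b : ∀ᵐ x ∂μ, ‖u₀ x‖ ≤ C)
    (htest : ∀ h : α → ℝ, Integrable h μ → ∀ i : Fin d,
      Tendsto (fun k => ∫ x, h x * v k x i ∂μ) atTop (𝓝 (∫ x, h x * u₀ x i ∂μ)))
    (q : Fin d → ℝ) (r ε : ℝ) (n : ℕ) (η : Fin d → ℝ) :
    μ.prod μ {p : α × α | r < lin q (u₀ p.1) ∧
      (∀ k, n ≤ k → (‖v k p.2 - η‖ < ε → lin q (v k p.1) < r)) ∧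
      (∀ m : ℕ, ∃ k, m ≤ k ∧ ‖v k p.2 - η‖ < ε)} = 0 := by
  classical
  set P : Set (α × α) := {p : α × α | r < lin q (u₀ p.1) ∧
      (∀ k, n ≤ k → (‖v k p.2 - η‖ < ε → lin q (v k p.1) < r)) ∧
      (∀ m : ℕ, ∃ k, m ≤ k ∧ ‖v k p.2 - η‖ < ε)} with hP
  have hnm : ∀ k : ℕ, Measurable fun p : α × α => ‖v k p.2 - η‖ :=
    fun k => (((hvm k).comp measurable_snd).sub measurable_const).norm
  have hPm : MeasurableSet P := by
    refine MeasurableSet.inter ?_ (MeasurableSet.inter ?_ ?_)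
    · exact measurableSet_lt measurable_const
        ((measurable_lin q).comp (hu₀.comp measurable_fst))
    · show MeasurableSet {p : α × α | ∀ k : ℕ, n ≤ k → (‖v k p.2 - η‖ < ε → lin q (v k p.1) < r)}
      rw [Set.setOf_forall]
      refine MeasurableSet.iInter fun k => ?_
      by_cases hk : n ≤ k
      · simp only [hk, true_implies]
        exact measurable_imp (measurableSet_lt (hnm k) measurable_const)
          (measurableSet_lt ((measurable_lin q).comp ((hvm k).comp measurable_fst))
            measurable_const)
      · simp only [hk, false_implies, Set.setOf_true]
        exact MeasurableSet.univ
    · show MeasurableSet {p : α × α | ∀ m : ℕ, ∃ k, m ≤ k ∧ ‖v k p.2 - η‖ < ε}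
      rw [Set.setOf_forall]
      refine MeasurableSet.iInter fun m => ?_
      rw [Set.setOf_exists]
      refine MeasurableSet.iUnion fun k => ?_
      by_cases hk : m ≤ k
      · simp only [hk, true_and]
        exact measurableSet_lt (hnm k) measurable_const
      · simp only [hk, false_and, Set.setOf_false]
        exact MeasurableSet.empty
  by_contra hP0
  have hsec : ∃ y, μ ((fun x => (x, y)) ⁻¹' P) ≠ 0 := by
    by_contra hcon
    push_neg at hcon
    refine hP0 ?_
    rw [Measure.prod_apply_symm hPm]
    simp only [hcon, lintegral_zero]
  obtain ⟨y, hy0⟩ := hsec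
  have hBm : MeasurableSet ((fun x => (x, y)) ⁻¹' P) :=
    hPm.preimage (measurable_id.prodMk measurable_const)
  obtain ⟨x₀, hx₀⟩ := nonempty_of_measure_ne_zero hy0
  refine no_sep_test hvm hu₀ hvb hu₀b htest hBm hy0 (q := q) (r := r)
    (K := fun k => n ≤ k ∧ ‖v k y - η‖ < ε) ?_ ?_ ?_
  · intro m
    obtain ⟨k, hk1, hk2⟩ := hx₀.2.2 (max n m)
    exact ⟨k, le_trans (le_max_right n m) hk1, le_trans (le_max_left n m) hk1, hk2⟩
  · intro x hx k hk
    exact hx.2.1 k hk.1 hk.2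
  · intro x hx
    exact hx.1

lemma limit_bound {v : ℕ → α → Fin d → ℝ} {u₀ : α → Fin d → ℝ} {C : ℝ} (hC0 : 0 ≤ C)
    (hvm : ∀ k, Measurable (v k)) (hu₀ : Measurable u₀)
    (hvb : ∀ k, ∀ᵐ x ∂μ, ‖v k x‖ ≤ C)
    (htest : ∀ h : α → ℝ, Integrable h μ → ∀ i : Fin d,
      Tendsto (fun k => ∫ x, h x * v k x i ∂μ) atTop (𝓝 (∫ x, h x * u₀ x i ∂μ))) :
    ∀ᵐ x ∂μ, ‖u₀ x‖ ≤ C := by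
  classical
  have upper : ∀ (w : ℕ → α → Fin d → ℝ) (w₀ : α → Fin d → ℝ), (∀ k, Measurable (w k)) →
      Measurable w₀ → (∀ k, ∀ᵐ x ∂μ, ‖w k x‖ ≤ C) →
      (∀ h : α → ℝ, Integrable h μ → ∀ i : Fin d,
        Tendsto (fun k => ∫ x, h x * w k x i ∂μ) atTop (𝓝 (∫ x, h x * w₀ x i ∂μ))) →
      ∀ i : Fin d, ∀ᵐ x ∂μ, w₀ x i ≤ C := by
    intro w w₀ hwm hw₀ hwb htst i
    have hMnull : ∀ M : ℕ, μ {x | C < w₀ x i ∧ ‖w₀ x‖ ≤ (M:ℝ)} = 0 := by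
      intro M
      by_contra hB0
      set B := {x | C < w₀ x i ∧ ‖w₀ x‖ ≤ (M:ℝ)} with hBdef
      have hBm : MeasurableSet B :=
        (measurableSet_lt measurable_const ((measurable_pi_apply i).comp hw₀)).inter
          (measurableSet_le hw₀.norm measurable_const)
      set h : α → ℝ := B.indicator fun _ => (1:ℝ) with hh
      have hhm : Measurable h := measurable_const.indicator hBm
      have hhi : Integrable h μ := (integrable_const (1:ℝ)).indicator hBm
      have hub : ∀ k, ∫ x, h x * w k x i ∂μ ≤ C * (μ B).toReal := by
        intro k
        have hple : ∀ᵐ x ∂μ, h x * w k x i ≤ B.indicator (fun _ => C) x := by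
          filter_upwards [hwb k] with x hx
          by_cases hxB : x ∈ B
          · simp only [hh, Set.indicator_of_mem hxB, one_mul]
            exact le_trans (le_trans (le_abs_self _)
              (by simpa using norm_le_pi_norm (w k x) i)) hx
          · simp [hh, Set.indicator_of_notMem hxB]
        have hint : Integrable (fun x => h x * w k x i) μ := by
          refine integrable_of_ae_bound
            ((hhm.mul ((measurable_pi_apply i).comp (hwm k))).aestronglyMeasurable)
            (M := C) ?_
          filter_upwards [hwb k] with x hx
          have habs : |h x| ≤ 1 := by
            by_cases hxB : x ∈ B <;> simp [hh, Set.indicator_apply, hxB]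
          calc |h x * w k x i| = |h x| * |w k x i| := abs_mul _ _
            _ ≤ 1 * C := mul_le_mul habs
                (le_trans (by simpa using norm_le_pi_norm (w k x) i) hx)
                (abs_nonneg _) zero_le_one
            _ = C := one_mul C
        calc ∫ x, h x * w k x i ∂μ ≤ ∫ x, B.indicator (fun _ => C) x ∂μ :=
              integral_mono_ae hint ((integrable_const C).indicator hBm) hple
          _ = (μ B).toReal • C := integral_indicator_const C hBm
          _ = C * (μ B).toReal := by rw [smul_eq_mul]; ring
      have hlim : ∫ x, h x * w₀ x i ∂μ ≤ C * (μ B).toReal :=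
        le_of_tendsto (htst h hhi i) (Eventually.of_forall hub)
      have heq : ∫ x, h x * w₀ x i ∂μ = ∫ x in B, w₀ x i ∂μ := by
        rw [← integral_indicator hBm]
        congr 1; funext x
        by_cases hx : x ∈ B <;> simp [hh, Set.indicator_apply, hx]
      have hIO : IntegrableOn (fun x => w₀ x i) B μ := by
        refine integrable_of_ae_bound (μ := μ.restrict B)
          (((measurable_pi_apply i).comp hw₀).aestronglyMeasurable) (M := (M:ℝ)) ?_
        filter_upwards [ae_restrict_mem hBm] with x hx
        exact le_trans (by simpa using norm_le_pi_norm (w₀ x) i) hx.2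
      have hgt : C * (μ B).toReal < ∫ x in B, w₀ x i ∂μ :=
        integral_gt_of_lt_on hBm hB0 ((measurable_pi_apply i).comp hw₀) hIO
          (fun x hx => hx.1)
      rw [heq] at hlim
      linarith
    have hcov : {x | C < w₀ x i} ⊆ ⋃ M : ℕ, {x | C < w₀ x i ∧ ‖w₀ x‖ ≤ (M:ℝ)} := by
      intro x hx
      obtain ⟨M, hM⟩ := exists_nat_ge ‖w₀ x‖
      exact mem_iUnion.2 ⟨M, hx, hM⟩
    have hnull : μ {x | C < w₀ x i} = 0 :=
      measure_mono_null hcov (measure_iUnion_null hMnull)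
    rw [ae_iff]
    simpa only [not_le] using hnull
  have h1 : ∀ i : Fin d, ∀ᵐ x ∂μ, u₀ x i ≤ C := fun i => upper v u₀ hvm hu₀ hvb htest i
  have h2 : ∀ i : Fin d, ∀ᵐ x ∂μ, (-(u₀ x)) i ≤ C := by
    intro i
    refine upper (fun k x => -(v k x)) (fun x => -(u₀ x)) (fun k => (hvm k).neg) hu₀.neg
      ?_ ?_ i
    · intro k; filter_upwards [hvb k] with x hx; simpa using hx
    · intro h hh i'
      have := (htest h hh i').neg
      simp only [← integral_neg, mul_neg] at this
      simpa using this
  filter_upwards [ae_all_iff.2 h1, ae_all_iff.2 h2] with x hx1 hx2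
  rw [pi_norm_le_iff_of_nonneg hC0]
  intro i
  rw [Real.norm_eq_abs, abs_le]
  refine ⟨?_, hx1 i⟩
  have := hx2 i
  simp only [Pi.neg_apply] at this
  linarith

end Integral

/-- Pointwise core of the lower semicontinuity proof: at a fixed good pair `(x, y)`,
separate level convexity, lower semicontinuity, the uniform sublevel bound along the
sequence, and the non-membership in all the bad sets `P` and `Q` force the limit pair
into the sublevel set. -/
lemma pointwise_main {Wxy : (Fin d → ℝ) → (Fin d → ℝ) → ℝ} {t C : ℝ}
    {vx vy : ℕ → Fin d → ℝ} {ux uy : Fin d → ℝ}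
    (hlsc : LowerSemicontinuous fun p : (Fin d → ℝ) × (Fin d → ℝ) => Wxy p.1 p.2)
    (hconv1 : ∀ η, Convex ℝ {ξ | Wxy ξ η ≤ t})
    (hconv2 : ∀ ξ, Convex ℝ {η | Wxy ξ η ≤ t})
    (hle : ∀ k, Wxy (vx k) (vy k) ≤ t)
    (hbx : ∀ k, ‖vx k‖ ≤ C) (hby : ∀ k, ‖vy k‖ ≤ C)
    (hP : ∀ (q : Fin d → ℚ) (r ε : ℚ) (n : ℕ) (η' : Fin d → ℚ), 0 < (ε:ℝ) →
      ¬((r:ℝ) < lin (fun i => (q i:ℝ)) ux ∧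
        (∀ k, n ≤ k → (‖vy k - (fun i => (η' i:ℝ))‖ < (ε:ℝ) →
          lin (fun i => (q i:ℝ)) (vx k) < r)) ∧
        (∀ m : ℕ, ∃ k, m ≤ k ∧ ‖vy k - (fun i => (η' i:ℝ))‖ < (ε:ℝ))))
    (hQ : ∀ (q : Fin d → ℚ) (r : ℚ) (n : ℕ),
      ¬((r:ℝ) < lin (fun i => (q i:ℝ)) uy ∧ ∀ k, n ≤ k →
        lin (fun i => (q i:ℝ)) (vy k) < r)) :
    Wxy ux uy ≤ t := by
  have hclP : IsClosed {p : (Fin d → ℝ) × (Fin d → ℝ) | Wxy p.1 p.2 ≤ t} := by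
    exact hlsc.isClosed_preimage t
  have hclT : ∀ η, IsClosed {ξ | Wxy ξ η ≤ t} := by
    intro η
    exact hclP.preimage (continuous_id.prodMk continuous_const)
  have hclS : IsClosed {η | Wxy ux η ≤ t} :=
    hclP.preimage (continuous_const.prodMk continuous_id)
  -- Step A : every cluster point of `vy` pairs with `ux` inside the sublevel set
  have stepA : ∀ η ∈ Cl vy, Wxy ux η ≤ t := by
    intro η hη
    by_contra hgt
    push_neg at hgt
    set T := {ξ | Wxy ξ η ≤ t} ∩ closedBall (0 : Fin d → ℝ) C with hT
    have hTconv : Convex ℝ T := (hconv1 η).inter (convex_closedBall _ _)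
    have hTcl : IsClosed T := (hclT η).inter isClosed_closedBall
    have hTb : ∀ ξ ∈ T, ‖ξ‖ ≤ C := fun ξ hξ => mem_closedBall_zero_iff.1 hξ.2
    have hux : ux ∉ T := fun hmem => absurd hmem.1 (by simp only [mem_setOf_eq]; linarith)
    obtain ⟨q, r, hqT, hqux⟩ := sep_rat hTconv hTcl hTb hux
    set a : Fin d → ℝ := fun i => (q i : ℝ) with ha
    have claim : ∃ ε0 : ℝ, 0 < ε0 ∧ ∃ n : ℕ, ∀ k, n ≤ k → ‖vy k - η‖ < ε0 →
        lin a (vx k) < r := by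
      by_contra hcon
      push_neg at hcon
      have hfreq : ∀ n m : ℕ, ∃ k, m ≤ k ∧
          (‖vy k - η‖ < 1 / (n + 1) ∧ (r:ℝ) ≤ lin a (vx k)) := by
        intro n m
        obtain ⟨k, hk1, hk2, hk3⟩ := hcon (1 / (n + 1)) (by positivity) m
        exact ⟨k, hk1, hk2, hk3⟩
      obtain ⟨φ, hφ, hφprop⟩ := nat_extraction hfreq
      obtain ⟨ξ, ψ, hψ, -, hξb, hξlim⟩ := subseq_cluster
        (w := fun k => vx (φ k)) (C := C) (fun k => hbx (φ k))
        (Q := fun _ => True) (fun m => ⟨m, le_rfl, trivial⟩)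
      have hyt : Tendsto (fun j => vy (φ (ψ j))) atTop (𝓝 η) := by
        refine tendsto_of_norm_sub_lt fun j => ?_
        refine lt_of_lt_of_le (hφprop (ψ j)).1 ?_
        refine one_div_le_one_div_of_le (by positivity) ?_
        have := hψ.id_le j
        have : (j:ℝ) ≤ (ψ j : ℝ) := Nat.cast_le.2 this
        linarith
      have hpair : Tendsto (fun j => (vx (φ (ψ j)), vy (φ (ψ j)))) atTop (𝓝 (ξ, η)) :=
        Tendsto.prodMk_nhds hξlim hyt
      have hWξη : Wxy ξ η ≤ t := by
        by_contra hW
        push_neg at hW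
        have hev := hlsc (ξ, η) t hW
        obtain ⟨j, hj⟩ := (hpair.eventually hev).exists
        exact absurd (hle (φ (ψ j))) (not_le.2 hj)
      have hmemT : ξ ∈ T := ⟨hWξη, mem_closedBall_zero_iff.2 hξb⟩
      have h1 : lin a ξ < r := hqT ξ hmemT
      have h2 : (r:ℝ) ≤ lin a ξ := by
        refine ge_of_tendsto' (((lin_continuous a).tendsto ξ).comp hξlim) fun j => ?_
        exact (hφprop (ψ j)).2
      linarith
    obtain ⟨ε0, hε0, n, hclaim⟩ := claim
    obtain ⟨ε, hε1, hε2⟩ := exists_rat_btwn (show (0:ℝ) < ε0 / 2 by linarith)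
    have hεpos : 0 < (ε:ℝ) := hε1
    obtain ⟨η', hη'⟩ : ∃ η' : Fin d → ℚ, ∀ i, |η i - (η' i : ℝ)| < (ε:ℝ) / 2 := by
      have h : ∀ i : Fin d, ∃ c : ℚ, η i < (c:ℝ) ∧ (c:ℝ) < η i + (ε:ℝ)/2 :=
        fun i => exists_rat_btwn (show η i < η i + (ε:ℝ)/2 by linarith)
      choose η' h1 h2 using h
      refine ⟨η', fun i => ?_⟩
      rw [abs_sub_lt_iff]
      constructor
      · linarith [h1 i]
      · linarith [h2 i]
    have hdist : ‖η - (fun i => (η' i : ℝ))‖ < (ε:ℝ) / 2 := by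
      rw [pi_norm_lt_iff (by linarith)]
      intro i
      simpa [Real.norm_eq_abs] using hη' i
    refine hP q r ε n η' hεpos ⟨hqux, ?_, ?_⟩
    · intro k hk hnear
      refine hclaim k hk ?_
      have htri : dist (vy k) η ≤ dist (vy k) (fun i => (η' i : ℝ)) +
          dist (fun i => (η' i : ℝ)) η := dist_triangle _ _ _
      rw [dist_eq_norm, dist_eq_norm, dist_eq_norm] at htri
      have h2 : ‖(fun i => (η' i : ℝ)) - η‖ = ‖η - (fun i => (η' i : ℝ))‖ := norm_sub_rev _ _
      rw [h2] at htri
      have : ‖vy k - η‖ < (ε:ℝ) + (ε:ℝ)/2 := by linarith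
      linarith
    · intro m
      obtain ⟨k, hk1, hk2⟩ := hη ((ε:ℝ)/2) (by linarith) m
      refine ⟨k, hk1, ?_⟩
      have htri : dist (vy k) (fun i => (η' i : ℝ)) ≤ dist (vy k) η +
          dist η (fun i => (η' i : ℝ)) := dist_triangle _ _ _
      rw [dist_eq_norm, dist_eq_norm, dist_eq_norm] at htri
      linarith
  -- Step B : `uy` belongs to the closed convex hull of the cluster set of `vy`
  have hClb : ∀ η ∈ Cl vy, ‖η‖ ≤ C := Cl_subset_ball hby
  have stepB : uy ∈ closure (convexHull ℝ (Cl vy)) := by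
    by_contra huy
    have hKconv : Convex ℝ (closure (convexHull ℝ (Cl vy))) := (convex_convexHull ℝ _).closure
    have hKcl : IsClosed (closure (convexHull ℝ (Cl vy))) := isClosed_closure
    have hKb : ∀ ξ ∈ closure (convexHull ℝ (Cl vy)), ‖ξ‖ ≤ C := by
      have h1 : convexHull ℝ (Cl vy) ⊆ closedBall 0 C := convexHull_min
        (fun η hη => mem_closedBall_zero_iff.2 (hClb η hη)) (convex_closedBall _ _)
      have h2 : closure (convexHull ℝ (Cl vy)) ⊆ closedBall 0 C :=
        closure_minimal h1 isClosed_closedBall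
      exact fun ξ hξ => mem_closedBall_zero_iff.1 (h2 hξ)
    obtain ⟨q, r, hqK, hquy⟩ := sep_rat hKconv hKcl hKb huy
    set a : Fin d → ℝ := fun i => (q i : ℝ) with ha
    have hn : ∃ n : ℕ, ∀ k, n ≤ k → lin a (vy k) < r := by
      by_contra hcon
      push_neg at hcon
      obtain ⟨η, ψ, hψ, hψQ, -, hηlim⟩ := subseq_cluster hby
        (Q := fun k => (r:ℝ) ≤ lin a (vy k)) hcon
      have hmem : η ∈ Cl vy := mem_Cl_of_tendsto hψ hηlim
      have h1 : lin a η < r := hqK η (subset_closure (subset_convexHull ℝ _ hmem))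
      have h2 : (r:ℝ) ≤ lin a η :=
        ge_of_tendsto' (((lin_continuous a).tendsto η).comp hηlim) hψQ
      linarith
    obtain ⟨n, hn⟩ := hn
    exact hQ q r n ⟨hquy, hn⟩
  have hsubset : closure (convexHull ℝ (Cl vy)) ⊆ {η | Wxy ux η ≤ t} :=
    closure_minimal (convexHull_min (fun η hη => stepA η hη) (hconv2 ux)) hclS
  exact hsubset stepB

end NLSAux

end NLSAuxSection

/-- `W` is separately level convex: all sublevel sets in each variable separately are convex. -/
def SeparatelyLevelConvex {E F : Type*} [AddCommMonoid E] [Module ℝ E]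
    [AddCommMonoid F] [Module ℝ F] (W : E → F → ℝ) : Prop :=
  ∀ c : ℝ, (∀ η, Convex ℝ {ξ | W ξ η ≤ c}) ∧ (∀ ξ, Convex ℝ {η | W ξ η ≤ c})

/-- Weak* convergence `u_j ⇀* u₀` in `L^∞(Ω;ℝ^d)`: the sequence is uniformly bounded and
converges tested against arbitrary `L¹` functions. -/
def WeakStarConvLinfty {N d : ℕ} (Ω : Set (Fin N → ℝ))
    (u : ℕ → (Fin N → ℝ) → (Fin d → ℝ)) (u₀ : (Fin N → ℝ) → (Fin d → ℝ)) : Prop :=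
  (∀ j, Measurable (u j)) ∧ Measurable u₀ ∧
  (∃ C : ℝ, ∀ j, ∀ᵐ x ∂(volume.restrict Ω), ‖u j x‖ ≤ C) ∧
  ∀ h : (Fin N → ℝ) → ℝ, Integrable h (volume.restrict Ω) →
    ∀ i : Fin d, Tendsto (fun j => ∫ x in Ω, h x * u j x i) atTop
      (𝓝 (∫ x in Ω, h x * u₀ x i))

/-- **Lower semicontinuity of nonlocal supremal functionals on `L^∞` under separate level
convexity.**  Let `Ω ⊂ ℝ^N` be a bounded open set and `W : Ω × Ω × ℝ^d × ℝ^d → ℝ` a normal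
integrand, bounded from below, with `W(x,y,·,·)` separately level convex for a.e. `(x,y)`.
Then `G(u) = esssup_{(x,y) ∈ Ω×Ω} W(x,y,u(x),u(y))` is sequentially weakly* lower
semicontinuous on `L^∞(Ω;ℝ^d)`. -/
theorem lsc_nonlocal_supremal_Linfty {N d : ℕ}
    (Ω : Set (Fin N → ℝ)) (hΩo : IsOpen Ω) (hΩb : IsBounded Ω)
    (W : (Fin N → ℝ) → (Fin N → ℝ) → (Fin d → ℝ) → (Fin d → ℝ) → ℝ)
    (hWmeas : Measurable fun p : ((Fin N → ℝ) × (Fin N → ℝ)) × (Fin d → ℝ) × (Fin d → ℝ) =>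
      W p.1.1 p.1.2 p.2.1 p.2.2)
    (hWlsc : ∀ᵐ p ∂((volume.restrict Ω).prod (volume.restrict Ω)),
      LowerSemicontinuous fun q : (Fin d → ℝ) × (Fin d → ℝ) => W p.1 p.2 q.1 q.2)
    (hWbdd : ∃ c : ℝ, ∀ x y ξ η, c ≤ W x y ξ η)
    (hWlc : ∀ᵐ p ∂((volume.restrict Ω).prod (volume.restrict Ω)),
      SeparatelyLevelConvex (W p.1 p.2))
    (G : ((Fin N → ℝ) → (Fin d → ℝ)) → EReal)
    (hG : ∀ u, G u = essSup (fun p : (Fin N → ℝ) × (Fin N → ℝ) =>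
        (W p.1 p.2 (u p.1) (u p.2) : EReal))
      ((volume.restrict Ω).prod (volume.restrict Ω)))
    (u : ℕ → (Fin N → ℝ) → (Fin d → ℝ)) (u₀ : (Fin N → ℝ) → (Fin d → ℝ))
    (hconv : WeakStarConvLinfty Ω u u₀) :
    G u₀ ≤ liminf (fun j => G (u j)) atTop := by
  classical
  obtain ⟨humeas, hu0meas, ⟨C, hC⟩, htest⟩ := hconv
  set μ : Measure (Fin N → ℝ) := volume.restrict Ω with hμdef
  haveI hfin : IsFiniteMeasure μ := ⟨by
    rw [hμdef, Measure.restrict_apply_univ]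
    exact hΩb.measure_lt_top⟩
  by_cases hμ0 : μ = 0
  · have hprod : μ.prod μ = 0 := by
      ext s hs
      rw [Measure.prod_apply hs, hμ0]
      simp
    rw [hG u₀, show ((volume.restrict Ω).prod (volume.restrict Ω)) = μ.prod μ from rfl,
      hprod, essSup_measure_zero]
    exact bot_le
  haveI : (ae μ).NeBot := ae_neBot.2 hμ0
  obtain ⟨x₀, hx₀⟩ := (hC 0).exists
  have hC0 : (0:ℝ) ≤ C := le_trans (norm_nonneg _) hx₀
  have hu₀b : ∀ᵐ x ∂μ, ‖u₀ x‖ ≤ C := NLSAux.limit_bound hC0 humeas hu0meas hC htest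
  set π : Measure ((Fin N → ℝ) × (Fin N → ℝ)) := μ.prod μ with hπdef
  have hπ0 : π ≠ 0 := by
    intro h0
    have h1 : π Set.univ = 0 := by rw [h0]; simp
    rw [hπdef, ← Set.univ_prod_univ, Measure.prod_prod] at h1
    rcases mul_eq_zero.1 h1 with h2 | h2 <;>
      exact hμ0 (Measure.measure_univ_eq_zero.1 h2)
  suffices Key : ∀ t : ℝ, liminf (fun j => G (u j)) atTop < (t:EReal) → G u₀ ≤ (t:EReal) by
    by_contra hcon
    push_neg at hcon
    obtain ⟨t, h1, h2⟩ := EReal.exists_between_coe_real hcon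
    exact absurd (Key t h1) (not_le.2 h2)
  intro t hlt
  have hfreq : ∃ᶠ j in atTop, G (u j) < (t:EReal) := frequently_lt_of_liminf_lt (by isBoundedDefault) hlt
  obtain ⟨φ, hφmono, hφ⟩ := extraction_of_frequently_atTop hfreq
  set v : ℕ → (Fin N → ℝ) → (Fin d → ℝ) := fun k => u (φ k) with hv
  have hvm : ∀ k, Measurable (v k) := fun k => humeas (φ k)
  have hvb : ∀ k, ∀ᵐ x ∂μ, ‖v k x‖ ≤ C := fun k => hC (φ k)
  have htestv : ∀ h : (Fin N → ℝ) → ℝ, Integrable h μ → ∀ i : Fin d,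
      Tendsto (fun k => ∫ x, h x * v k x i ∂μ) atTop (𝓝 (∫ x, h x * u₀ x i ∂μ)) :=
    fun h hh i => (htest h hh i).comp hφmono.tendsto_atTop
  have hWle : ∀ k, ∀ᵐ p ∂π, W p.1 p.2 (v k p.1) (v k p.2) ≤ t := by
    intro k
    have h1 : essSup (fun p : (Fin N → ℝ) × (Fin N → ℝ) =>
        (W p.1 p.2 (v k p.1) (v k p.2) : EReal)) π ≤ (t : EReal) := by
      rw [← hG (v k)]
      exact (hφ k).le
    have h2 := ae_le_essSup (μ := π)
      (f := fun p : (Fin N → ℝ) × (Fin N → ℝ) => (W p.1 p.2 (v k p.1) (v k p.2) : EReal))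
    filter_upwards [h2] with p hp
    exact_mod_cast le_trans hp h1
  have hlift1 : ∀ (pr : (Fin N → ℝ) → Prop), (∀ᵐ x ∂μ, pr x) → (∀ᵐ p ∂π, pr p.1) := by
    intro pr hpr
    rw [ae_iff] at hpr ⊢
    obtain ⟨S, hS1, hS2, hS3⟩ := exists_measurable_superset_of_null hpr
    refine measure_mono_null (t := S ×ˢ Set.univ) (fun p hp => ?_) ?_
    · exact Set.mem_prod.2 ⟨hS1 hp, Set.mem_univ _⟩
    · rw [hπdef, Measure.prod_prod, hS3, zero_mul]
  have hlift2 : ∀ (pr : (Fin N → ℝ) → Prop), (∀ᵐ x ∂μ, pr x) → (∀ᵐ p ∂π, pr p.2) := by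
    intro pr hpr
    rw [ae_iff] at hpr ⊢
    obtain ⟨S, hS1, hS2, hS3⟩ := exists_measurable_superset_of_null hpr
    refine measure_mono_null (t := Set.univ ×ˢ S) (fun p hp => ?_) ?_
    · exact Set.mem_prod.2 ⟨Set.mem_univ _, hS1 hp⟩
    · rw [hπdef, Measure.prod_prod, hS3, mul_zero]
  have hPnull : ∀ (q : Fin d → ℚ) (r ε : ℚ) (n : ℕ) (η' : Fin d → ℚ),
      ∀ᵐ p ∂π, ¬((r:ℝ) < NLSAux.lin (fun i => (q i:ℝ)) (u₀ p.1) ∧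
        (∀ k, n ≤ k → (‖v k p.2 - (fun i => (η' i:ℝ))‖ < (ε:ℝ) →
          NLSAux.lin (fun i => (q i:ℝ)) (v k p.1) < r)) ∧
        (∀ m : ℕ, ∃ k, m ≤ k ∧ ‖v k p.2 - (fun i => (η' i:ℝ))‖ < (ε:ℝ))) := by
    intro q r ε n η'
    have h0 := NLSAux.P_null (μ := μ) hvm hu0meas hvb hu₀b htestv
      (fun i => (q i:ℝ)) (r:ℝ) (ε:ℝ) n (fun i => (η' i:ℝ))
    exact measure_eq_zero_iff_ae_notMem.1 h0
  have hQnull : ∀ (q : Fin d → ℚ) (r : ℚ) (n : ℕ),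
      ∀ᵐ p ∂π, ¬((r:ℝ) < NLSAux.lin (fun i => (q i:ℝ)) (u₀ p.2) ∧
        ∀ k, n ≤ k → NLSAux.lin (fun i => (q i:ℝ)) (v k p.2) < r) := by
    intro q r n
    have h0 := NLSAux.Q_null (μ := μ) hvm hu0meas hvb hu₀b htestv
      (fun i => (q i:ℝ)) (r:ℝ) n
    exact hlift2 _ (measure_eq_zero_iff_ae_notMem.1 h0)
  have hmain : ∀ᵐ p ∂π, W p.1 p.2 (u₀ p.1) (u₀ p.2) ≤ t := by
    have hA : ∀ᵐ p ∂π, ∀ k, W p.1 p.2 (v k p.1) (v k p.2) ≤ t := ae_all_iff.2 hWle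
    have hBx : ∀ᵐ p ∂π, ∀ k, ‖v k p.1‖ ≤ C := hlift1 _ (ae_all_iff.2 hvb)
    have hBy : ∀ᵐ p ∂π, ∀ k, ‖v k p.2‖ ≤ C := hlift2 _ (ae_all_iff.2 hvb)
    have hPall : ∀ᵐ p ∂π, ∀ (q : Fin d → ℚ) (r ε : ℚ) (n : ℕ) (η' : Fin d → ℚ),
        ¬((r:ℝ) < NLSAux.lin (fun i => (q i:ℝ)) (u₀ p.1) ∧
          (∀ k, n ≤ k → (‖v k p.2 - (fun i => (η' i:ℝ))‖ < (ε:ℝ) →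
            NLSAux.lin (fun i => (q i:ℝ)) (v k p.1) < r)) ∧
          (∀ m : ℕ, ∃ k, m ≤ k ∧ ‖v k p.2 - (fun i => (η' i:ℝ))‖ < (ε:ℝ))) :=
      ae_all_iff.2 fun q => ae_all_iff.2 fun r => ae_all_iff.2 fun ε =>
        ae_all_iff.2 fun n => ae_all_iff.2 fun η' => hPnull q r ε n η'
    have hQall : ∀ᵐ p ∂π, ∀ (q : Fin d → ℚ) (r : ℚ) (n : ℕ),
        ¬((r:ℝ) < NLSAux.lin (fun i => (q i:ℝ)) (u₀ p.2) ∧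
          ∀ k, n ≤ k → NLSAux.lin (fun i => (q i:ℝ)) (v k p.2) < r) :=
      ae_all_iff.2 fun q => ae_all_iff.2 fun r => ae_all_iff.2 fun n => hQnull q r n
    filter_upwards [hWlsc, hWlc, hA, hBx, hBy, hPall, hQall]
      with p hp1 hp2 hp3 hp4 hp5 hp6 hp7
    exact NLSAux.pointwise_main hp1 (fun η => (hp2 t).1 η) (fun ξ => (hp2 t).2 ξ)
      hp3 hp4 hp5 (fun q r ε n η' _ => hp6 q r ε n η') hp7
  have hess : essSup (fun p : (Fin N → ℝ) × (Fin N → ℝ) =>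
      (W p.1 p.2 (u₀ p.1) (u₀ p.2) : EReal)) π ≤ (t:EReal) := by
    calc essSup (fun p : (Fin N → ℝ) × (Fin N → ℝ) =>
        (W p.1 p.2 (u₀ p.1) (u₀ p.2) : EReal)) π
        ≤ essSup (fun _ => (t:EReal)) π :=
          essSup_mono_ae (hmain.mono fun p hp => EReal.coe_le_coe_iff.2 hp)
      _ = (t:EReal) := essSup_const _ hπ0
  rw [hG u₀]
  exact hess

end
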